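/- arXiv:0906.4868 — 2 statements merged into one kernel-verified Lean document; each statement's English description precedes it below -/
import Mathlib

section
/- Let p be a prime and let n > 1, k ≥ 1, and h be integers with 1 ≤ h < n. Then ((p^k - 1)/(p-1)) · p^n - k - h is not in the image of Z_p. -/
/-- `Z b n` is the number of trailing zeroes of the base-`b` expansion of `n!`,
i.e. the largest `k` such that `b ^ k ∣ n!`. -/
def Z (b n : ℕ) : ℕ := padicValNat b (Nat.factorial n)

section aux
variable {p : ℕ} [hp : Fact p.Prime]

lemma Z_mono {a b : ℕ} (hab : a ≤ b) : Z p a ≤ Z p b := by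
  unfold Z
  obtain ⟨c, hc⟩ := Nat.factorial_dvd_factorial hab
  have hc0 : c ≠ 0 := by
    rintro rfl
    simp [Nat.factorial_ne_zero] at hc
  rw [hc, padicValNat.mul (Nat.factorial_ne_zero a) hc0]
  exact Nat.le_add_right _ _

lemma Z_pow (j : ℕ) : Z p (p ^ j) = ∑ i ∈ Finset.range j, p ^ i := by
  induction j with
  | zero => simp [Z]
  | succ j ih =>
    have : p ^ (j + 1) = p * p ^ j := by ring
    rw [this, Z, padicValNat_factorial_mul, ← Z, ih, Finset.sum_range_succ]

lemma Z_pow_sub_one (j : ℕ) (_hj : 1 ≤ j) :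
    Z p (p ^ j - 1) = (∑ i ∈ Finset.range j, p ^ i) - j := by
  have hpos : 0 < p ^ j := pow_pos hp.out.pos j
  have hfac : Nat.factorial (p ^ j) = p ^ j * Nat.factorial (p ^ j - 1) := by
    rw [← Nat.succ_pred_eq_of_pos hpos, Nat.factorial_succ]
    simp [Nat.succ_pred_eq_of_pos hpos]
  have := Z_pow (p := p) j
  rw [Z, hfac, padicValNat.mul (by positivity) (Nat.factorial_ne_zero _),
    padicValNat.prime_pow, ← Z] at this
  omega
end aux

section main
variable {p : ℕ} [hp : Fact p.Prime]

lemma geom_id (k : ℕ) : (p - 1) * ∑ i ∈ Finset.range k, p ^ i = p ^ k - 1 := by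
  induction k with
  | zero => simp
  | succ k ih =>
    have h1 : 1 ≤ p := hp.out.one_lt.le
    have h2 : p ^ (k + 1) = p * p ^ k := by ring
    have h3 : 1 ≤ p ^ k := Nat.one_le_pow _ _ hp.out.pos
    rw [Finset.sum_range_succ, Nat.mul_add, ih]
    rw [h2]
    have h4 : (p - 1) * p ^ k = p * p ^ k - p ^ k := by
      rw [Nat.sub_mul, one_mul]
    have h5 : p ^ k ≤ p * p ^ k := Nat.le_mul_of_pos_left _ hp.out.pos
    omega

lemma Z_main (k : ℕ) (hk : 1 ≤ k) (j : ℕ) :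
    Z p ((p ^ k - 1) * p ^ j) = (∑ i ∈ Finset.range k, p ^ i) * p ^ j - k := by
  set S := ∑ i ∈ Finset.range k, p ^ i with hS
  have hkS : k ≤ S := by
    calc k = ∑ _i ∈ Finset.range k, 1 := by simp
    _ ≤ S := Finset.sum_le_sum fun i _ => Nat.one_le_pow _ _ hp.out.pos
  induction j with
  | zero => simpa using Z_pow_sub_one k hk
  | succ j ih =>
    have hM : k ≤ S * p ^ j :=
      hkS.trans (Nat.le_mul_of_pos_right _ (pow_pos hp.out.pos _))
    have h2 : (p ^ k - 1) * p ^ (j + 1) = p * ((p ^ k - 1) * p ^ j) := by ring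
    rw [h2, Z, padicValNat_factorial_mul, ← Z, ih]
    have h3 : (p ^ k - 1) * p ^ j = p * (S * p ^ j) - S * p ^ j := by
      rw [← geom_id k, ← hS, Nat.sub_mul, one_mul, Nat.sub_mul]
      ring_nf
    have h4 : S * p ^ (j + 1) = p * (S * p ^ j) := by ring
    have h5 : S * p ^ j ≤ p * (S * p ^ j) :=
      Nat.le_mul_of_pos_left _ hp.out.pos
    omega

lemma val_m0 (k n : ℕ) (hk : 1 ≤ k) :
    padicValNat p ((p ^ k - 1) * p ^ n) = n := by
  have h1 : p ^ k - 1 ≠ 0 := by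
    have := Nat.one_lt_pow (by omega : k ≠ 0) hp.out.one_lt
    omega
  have h2 : ¬ p ∣ p ^ k - 1 := by
    intro hd
    have : p ∣ p ^ k := dvd_pow_self p (by omega)
    have := Nat.one_lt_pow (by omega : k ≠ 0) hp.out.one_lt
    have h3 : p ^ k - (p ^ k - 1) = 1 := by omega
    have h4 : p ∣ 1 := h3 ▸ Nat.dvd_sub ‹p ∣ p ^ k› hd
    have := Nat.eq_one_of_dvd_one h4
    have := hp.out.one_lt
    omega
  rw [padicValNat.mul h1 (pow_pos hp.out.pos _).ne', padicValNat.prime_pow,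
    padicValNat.eq_zero_of_not_dvd h2, zero_add]
end main

theorem family_b_not_in_image (p n k h : ℕ) (hp : p.Prime) (hn : 1 < n)
    (hk : 1 ≤ k) (hh1 : 1 ≤ h) (hhn : h < n) :
    ((p ^ k - 1) / (p - 1)) * p ^ n - k - h ∉ Set.range (Z p) := by
  haveI : Fact p.Prime := ⟨hp⟩
  set S := ∑ i ∈ Finset.range k, p ^ i with hS
  have hdiv : (p ^ k - 1) / (p - 1) = S := by
    rw [← geom_id k, Nat.mul_div_cancel_left _ (by have := hp.one_lt; omega)]
  rintro ⟨m, hm⟩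
  rw [hdiv] at hm
  set m0 := (p ^ k - 1) * p ^ n with hm0
  have hZm0 : Z p m0 = S * p ^ n - k := Z_main k hk n
  have hm0pos : 0 < m0 := by
    have h1 := Nat.one_lt_pow (by omega : k ≠ 0) hp.one_lt
    have h2 := pow_pos hp.pos n
    exact Nat.mul_pos (by omega) h2
  have hfac : Nat.factorial m0 = m0 * Nat.factorial (m0 - 1) := by
    rw [← Nat.succ_pred_eq_of_pos hm0pos, Nat.factorial_succ]
    simp [Nat.succ_pred_eq_of_pos hm0pos]
  have hZm0' : Z p m0 = Z p (m0 - 1) + n := by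
    rw [Z, hfac, padicValNat.mul (by omega) (Nat.factorial_ne_zero _),
      val_m0 k n hk, ← Z]
    omega
  have hkS : k ≤ S := by
    calc k = ∑ _i ∈ Finset.range k, 1 := by simp
    _ ≤ S := Finset.sum_le_sum fun i _ => Nat.one_le_pow _ _ hp.pos
  have hpn : n < p ^ n := Nat.lt_pow_self hp.one_lt
  have hA : k + n ≤ S * p ^ n := by
    have h1 : k * (n + 1) ≤ k * p ^ n := Nat.mul_le_mul_left _ (by omega)
    have h2 : k * p ^ n ≤ S * p ^ n := Nat.mul_le_mul_right _ hkS
    have h3 : n ≤ k * n := Nat.le_mul_of_pos_left n hk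
    have h4 : k * (n + 1) = k * n + k := by ring
    omega
  rcases le_or_gt m0 m with hc | hc
  · have := Z_mono (p := p) hc
    omega
  · have := Z_mono (p := p) (by omega : m ≤ m0 - 1)
    omega
end

section
/- Let p be a prime, r ≥ 2 an integer, and l a positive multiple of r with l < p. Then for all integers k > 1 and h with 1 ≤ h < k, the number (l/r) · Σ_{i=1}^{kr} p^{kr-i} - h = (l/r) · (p^{kr} - 1)/(p - 1) - h is not in the image of Z_{p^r}. -/
lemma padicValNat_pow_base {p r x : ℕ} (hp : p.Prime) (hr : 0 < r) (hx : x ≠ 0) :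
    padicValNat (p ^ r) x = padicValNat p x / r := by
  haveI : Fact p.Prime := ⟨hp⟩
  have hb : (p ^ r) ≠ 1 := Nat.ne_of_gt (Nat.one_lt_pow hr.ne' hp.one_lt)
  rw [padicValNat_def' hb hx]
  apply multiplicity_eq_of_dvd_of_not_dvd
  · rw [← pow_mul, padicValNat_dvd_iff_le hx]
    simpa [Nat.mul_comm] using Nat.div_mul_le_self (padicValNat p x) r
  · rw [← pow_mul, padicValNat_dvd_iff_le hx, not_le]
    exact Nat.lt_mul_div_succ _ hr

lemma padicValNat_fact_mul_pow {p : ℕ} (hp : p.Prime) {l : ℕ} (hl0 : 0 < l) (hlp : l < p)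
    (N : ℕ) : padicValNat p (Nat.factorial (l * p ^ N)) = l * ∑ i ∈ Finset.range N, p ^ i := by
  haveI : Fact p.Prime := ⟨hp⟩
  induction N with
  | zero =>
    simp only [pow_zero, mul_one, Finset.range_zero, Finset.sum_empty, Nat.mul_zero]
    apply padicValNat.eq_zero_of_not_dvd
    rw [hp.dvd_factorial]
    omega
  | succ n ih =>
    have h1 : l * p ^ (n + 1) = p * (l * p ^ n) := by ring
    rw [h1, padicValNat_factorial_mul, ih, Finset.sum_range_succ]
    ring

theorem family_not_in_image_multiple (p r l k h : ℕ) (hp : p.Prime) (hr : 2 ≤ r)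
    (hl0 : 0 < l) (hrl : r ∣ l) (hlp : l < p) (hk : 1 < k)
    (hh1 : 1 ≤ h) (hhk : h < k) :
    (l / r) * ((p ^ (k * r) - 1) / (p - 1)) - h ∉ Set.range (Z (p ^ r)) := by
  haveI : Fact p.Prime := ⟨hp⟩
  have hr0 : 0 < r := by omega
  obtain ⟨c, rfl⟩ := hrl
  have hc : 0 < c := Nat.pos_of_ne_zero (by rintro rfl; simp at hl0)
  have hcr : r * c / r = c := Nat.mul_div_cancel_left c hr0
  set G := ∑ i ∈ Finset.range (k * r), p ^ i with hG
  have hSG : (p ^ (k * r) - 1) / (p - 1) = G := (Nat.geomSum_eq hp.two_le _).symm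
  have hGk : k ≤ G := by
    calc k ≤ k * r := Nat.le_mul_of_pos_right k hr0
      _ = ∑ _i ∈ Finset.range (k * r), 1 := by simp
      _ ≤ G := Finset.sum_le_sum fun i _ => Nat.one_le_pow _ _ hp.pos
  have hkcG : k ≤ c * G := hGk.trans (Nat.le_mul_of_pos_left G hc)
  rw [hcr, hSG]
  rintro ⟨n, hn⟩
  set m := r * c * p ^ (k * r) with hm
  have hm0 : 0 < m := Nat.mul_pos (Nat.mul_pos hr0 hc) (pow_pos hp.pos _)
  have hV : padicValNat p (Nat.factorial m) = r * (c * G) := by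
    rw [hm, padicValNat_fact_mul_pow hp hl0 hlp, mul_assoc]
  have hvm : padicValNat p m = k * r := by
    rw [hm, padicValNat.mul (by omega) (pow_pos hp.pos _).ne',
      padicValNat.prime_pow, padicValNat.eq_zero_of_not_dvd, zero_add]
    intro hdvd
    have := Nat.le_of_dvd hl0 hdvd
    omega
  have hW : padicValNat p (Nat.factorial (m - 1)) = r * (c * G - k) := by
    have he : m * Nat.factorial (m - 1) = Nat.factorial m := Nat.mul_factorial_pred hm0.ne'
    have h2 := padicValNat.mul (p := p) (a := m) (b := Nat.factorial (m - 1))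
      (by omega) (Nat.factorial_ne_zero _)
    rw [he, hV, hvm] at h2
    have h3 : r * (c * G - k) + k * r = r * (c * G) := by
      rw [mul_comm k r, ← Nat.mul_add, Nat.sub_add_cancel hkcG]
    omega
  have mono : ∀ a b : ℕ, a ≤ b →
      padicValNat p (Nat.factorial a) ≤ padicValNat p (Nat.factorial b) := fun a b hab =>
    (padicValNat_dvd_iff_le (Nat.factorial_ne_zero b)).mp
      (dvd_trans pow_padicValNat_dvd (Nat.factorial_dvd_factorial hab))
  have hZ : Z (p ^ r) n = padicValNat p (Nat.factorial n) / r :=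
    padicValNat_pow_base hp hr0 (Nat.factorial_ne_zero n)
  rcases lt_or_ge n m with hlt | hle
  · have h1 : padicValNat p (Nat.factorial n) ≤ r * (c * G - k) := hW ▸ mono n (m - 1) (by omega)
    have h2 : Z (p ^ r) n ≤ c * G - k := by
      rw [hZ]
      calc padicValNat p (Nat.factorial n) / r ≤ r * (c * G - k) / r := Nat.div_le_div_right h1
        _ = c * G - k := Nat.mul_div_cancel_left _ hr0
    omega
  · have h1 : r * (c * G) ≤ padicValNat p (Nat.factorial n) := hV ▸ mono m n hle
    have h2 : c * G ≤ Z (p ^ r) n := by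
      rw [hZ]
      calc c * G = r * (c * G) / r := (Nat.mul_div_cancel_left _ hr0).symm
        _ ≤ _ := Nat.div_le_div_right h1
    omega
end
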